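/- Let T be a completely positive operator with Kraus operators A_1,...,A_m ∈ M_n(ℂ) and let c ≥ 1. Then T is c-rank-decreasing (there exists X ⪰ 0 with rank(T(X)) ≤ rank(X) - c) if and only if A_1,...,A_m admit a c-shrunk subspace (there exist subspaces V, W ⊆ ℂ^n with dim W ≤ dim V - c and A_i(V) ⊆ W for all i). -/

import Mathlib

open Matrix
open scoped ComplexOrder

private lemma sum_mulVec_aux {n : ℕ} {ι : Type*} (s : Finset ι)
    (M : ι → Matrix (Fin n) (Fin n) ℂ) (u : Fin n → ℂ) :
    (∑ i ∈ s, M i) *ᵥ u = ∑ i ∈ s, M i *ᵥ u := by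
  classical
  induction s using Finset.cons_induction with
  | empty => simp [Matrix.mulVec, dotProduct]
  | cons a s ha ih => rw [Finset.sum_cons, Finset.sum_cons, Matrix.add_mulVec, ih]

private lemma range_mul_conjTranspose_self {n : ℕ} {p : Type*} [Fintype p]
    (M : Matrix (Fin n) p ℂ) :
    LinearMap.range (M * Mᴴ).mulVecLin = LinearMap.range M.mulVecLin := by
  have hle : LinearMap.range (M * Mᴴ).mulVecLin ≤ LinearMap.range M.mulVecLin := by
    rw [Matrix.mulVecLin_mul]
    exact LinearMap.range_comp_le_range _ _
  refine Submodule.eq_of_le_of_finrank_le hle ?_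
  have h1 : Module.finrank ℂ (LinearMap.range M.mulVecLin) = M.rank := rfl
  have h2 : Module.finrank ℂ (LinearMap.range (M * Mᴴ).mulVecLin) = (M * Mᴴ).rank := rfl
  rw [h1, h2, Matrix.rank_self_mul_conjTranspose]

theorem c_rank_decreasing_iff_c_shrunk_subspace (n m c : ℕ) (hc : 1 ≤ c)
    (A : Fin m → Matrix (Fin n) (Fin n) ℂ) :
    (∃ X : Matrix (Fin n) (Fin n) ℂ, X.PosSemidef ∧
        (∑ i, A i * X * (A i)ᴴ).rank + c ≤ X.rank) ↔
      (∃ V W : Submodule ℂ (Fin n → ℂ),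
        Module.finrank ℂ W + c ≤ Module.finrank ℂ V ∧
        ∀ i, V.map (A i).mulVecLin ≤ W) := by
  classical
  constructor
  · rintro ⟨X, hX, hrank⟩
    open scoped MatrixOrder in set Y := CFC.sqrt X with hYdef
    open scoped MatrixOrder in have hYY : Y * Y = X := CFC.sqrt_mul_sqrt_self X hX.nonneg
    open scoped MatrixOrder in have hYH : Yᴴ = Y := (CFC.sqrt_nonneg X).posSemidef.isHermitian
    set S : Matrix (Fin n) (Fin n) ℂ := ∑ i, A i * X * (A i)ᴴ with hSdef
    -- block matrix D whose "columns" are those of the A i * Y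
    set D : Matrix (Fin n) (Fin m × Fin n) ℂ :=
      Matrix.of (fun j p => (A p.1 * Y) j p.2) with hDdef
    have hS2 : S = ∑ i, (A i * Y) * (A i * Y)ᴴ := by
      rw [hSdef]
      refine Finset.sum_congr rfl fun i _ => ?_
      rw [Matrix.conjTranspose_mul, hYH, ← hYY]
      noncomm_ring
    have hDD : D * Dᴴ = S := by
      rw [hS2]
      ext a b
      simp only [Matrix.mul_apply, Matrix.conjTranspose_apply, hDdef,
        Matrix.of_apply, Matrix.sum_apply]
      rw [Fintype.sum_prod_type, Finset.sum_comm]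
    have hCD : ∀ i : Fin m, LinearMap.range (A i * Y).mulVecLin ≤
        LinearMap.range D.mulVecLin := by
      intro i
      rintro x ⟨u, rfl⟩
      refine ⟨fun p => if p.1 = i then u p.2 else 0, ?_⟩
      ext j
      simp only [Matrix.mulVecLin_apply, Matrix.mulVec, dotProduct, hDdef,
        Matrix.of_apply]
      rw [Fintype.sum_prod_type]
      rw [Finset.sum_eq_single i]
      · simp
      · intro b _ hb
        simp [hb]
      · simp
    refine ⟨LinearMap.range X.mulVecLin, LinearMap.range S.mulVecLin, hrank, ?_⟩
    intro i
    rintro x ⟨v, ⟨u, rfl⟩, rfl⟩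
    have hx : (A i).mulVecLin (X.mulVecLin u) = (A i * Y).mulVecLin (Y.mulVecLin u) := by
      simp only [Matrix.mulVecLin_apply, Matrix.mulVec_mulVec, ← hYY, Matrix.mul_assoc]
    rw [hx]
    have : (A i * Y).mulVecLin (Y.mulVecLin u) ∈ LinearMap.range D.mulVecLin :=
      hCD i ⟨Y.mulVecLin u, rfl⟩
    rwa [← range_mul_conjTranspose_self, hDD] at this
  · rintro ⟨V, W, hVW, hmap⟩
    set b := Module.finBasis ℂ V with hb
    set B : Matrix (Fin n) (Fin (Module.finrank ℂ V)) ℂ :=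
      Matrix.of (fun i j => (b j : Fin n → ℂ) i) with hBdef
    have hBrange : LinearMap.range B.mulVecLin = V := by
      rw [Matrix.range_mulVecLin]
      have : Set.range B.col = V.subtype '' Set.range b := by
        ext x
        constructor
        · rintro ⟨j, rfl⟩
          exact ⟨b j, ⟨j, rfl⟩, rfl⟩
        · rintro ⟨v, ⟨j, rfl⟩, rfl⟩
          exact ⟨j, rfl⟩
      rw [this, ← Submodule.map_span, b.span_eq, Submodule.map_top, Submodule.range_subtype]
    refine ⟨B * Bᴴ, Matrix.posSemidef_self_mul_conjTranspose B, ?_⟩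
    set X : Matrix (Fin n) (Fin n) ℂ := B * Bᴴ with hXdef
    have hXrank : X.rank = Module.finrank ℂ V := by
      rw [hXdef, Matrix.rank_self_mul_conjTranspose]
      show Module.finrank ℂ (LinearMap.range B.mulVecLin) = _
      rw [hBrange]
    have hXrange : LinearMap.range X.mulVecLin ≤ V := by
      rw [hXdef, range_mul_conjTranspose_self, hBrange]
    have hSrange : LinearMap.range (∑ i, A i * X * (A i)ᴴ).mulVecLin ≤ W := by
      rintro x ⟨u, rfl⟩
      rw [Matrix.mulVecLin_apply, sum_mulVec_aux]
      refine Submodule.sum_mem W fun i _ => ?_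
      have : (A i * X * (A i)ᴴ) *ᵥ u = (A i).mulVecLin (X *ᵥ ((A i)ᴴ *ᵥ u)) := by
        simp [Matrix.mulVec_mulVec, Matrix.mul_assoc]
      rw [this]
      refine hmap i ⟨X *ᵥ ((A i)ᴴ *ᵥ u), ?_, rfl⟩
      exact hXrange ⟨(A i)ᴴ *ᵥ u, rfl⟩
    have hSrank : (∑ i, A i * X * (A i)ᴴ).rank ≤ Module.finrank ℂ W := by
      have := Submodule.finrank_mono hSrange
      exact this
    calc (∑ i, A i * X * (A i)ᴴ).rank + c ≤ Module.finrank ℂ W + c := by omega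
      _ ≤ Module.finrank ℂ V := hVW
      _ = X.rank := hXrank.symm
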